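/- For any fixed k ≥ 3, the set 𝒱^(k) ∪ {1^k 0^k} is a cross-fix-free code in which, moreover, no codeword is a factor of another: every element is bifix-free, for any two distinct elements no nonempty prefix of one equals a suffix of the other, and no element is a factor of a distinct element. -/

import Mathlib

/-!
Binary strings are modeled as `List Bool`, with `true` = 1 and `false` = 0.
-/

/-- A string `v` is bifix-free if no nonempty proper prefix of `v` equals a
(proper) suffix of `v`. -/
def BifixFree (v : List Bool) : Prop :=
  ∀ p : List Bool, p ≠ [] → p ≠ v → p <+: v → ¬ p <:+ v

/-- The set `V_n^(k)`: binary strings of length `n` starting with `k` ones,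
ending with `k` zeros, whose middle factor `v_{k+1} … v_{n-k}` begins with 0,
ends with 1, and contains neither `k` consecutive 0's nor `k` consecutive 1's. -/
def Vnk (n k : ℕ) : Set (List Bool) :=
  {v | v.length = n ∧
    List.replicate k true <+: v ∧
    List.replicate k false <:+ v ∧
    ((v.drop k).take (n - 2 * k)).head? = some false ∧
    ((v.drop k).take (n - 2 * k)).getLast? = some true ∧
    ¬ List.replicate k false <:+: ((v.drop k).take (n - 2 * k)) ∧
    ¬ List.replicate k true <:+: ((v.drop k).take (n - 2 * k))}

/-- `𝒱^(k) = ⋃_{i ≥ 2k+2} V_i^(k)`. -/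
def VkSet (k : ℕ) : Set (List Bool) := ⋃ i ∈ {i : ℕ | 2 * k + 2 ≤ i}, Vnk i k

/-- `𝒱^(k)(n)`: elements of `𝒱^(k)` of length at most `n`. -/
def VkLe (k n : ℕ) : Set (List Bool) := {v ∈ VkSet k | v.length ≤ n}

/-- The set of binary strings of length `ℓ` that begin with 0, end with 1, and
contain neither `k` consecutive 0's nor `k` consecutive 1's. -/
def Rset (k ℓ : ℕ) : Set (List Bool) :=
  {w | w.length = ℓ ∧ w.head? = some false ∧ w.getLast? = some true ∧
    ¬ List.replicate k false <:+: w ∧ ¬ List.replicate k true <:+: w}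

/-- `r_ℓ^(k)`, with the convention `r_0^(k) = 1`. -/
noncomputable def r (k ℓ : ℕ) : ℕ := if ℓ = 0 then 1 else (Rset k ℓ).ncard

/-- Shifted `k`-generalized Fibonacci numbers: `f_ℓ^(k) = 2^ℓ` for `ℓ ≤ k-1`, and
`f_ℓ^(k) = ∑_{i=1}^{k} f_{ℓ-i}^(k)` for `ℓ ≥ k`. -/
def f (k : ℕ) : ℕ → ℕ
  | ℓ =>
    if h : ℓ < k then 2 ^ ℓ
    else ∑ i ∈ (Finset.range k).attach, f k (ℓ - (i.1 + 1))
termination_by ℓ => ℓ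
decreasing_by
  have hi := i.2
  simp only [Finset.mem_range] at hi
  omega

/-- `S^(k)(n) = ∑_{ℓ=0}^{n} f_ℓ^(k)`. -/
def S (k n : ℕ) : ℕ := ∑ ℓ ∈ Finset.range (n + 1), f k ℓ

/-- `d_ℓ^(k)`: 1 if `ℓ ≡ 0 (mod k)`, -1 if `ℓ ≡ 1 (mod k)`, 0 otherwise. -/
def d (k ℓ : ℕ) : ℤ := if ℓ % k = 0 then 1 else if ℓ % k = 1 then -1 else 0

/-- A set of binary strings is a cross-fix-free code if every element is
bifix-free and, for any two distinct elements `v, v'`, no nonempty prefix of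
`v` (including `v` itself) is a suffix of `v'`, and vice versa. -/
def CrossFixFree (X : Set (List Bool)) : Prop :=
  (∀ v ∈ X, BifixFree v) ∧
  ∀ v ∈ X, ∀ v' ∈ X, v ≠ v' → ∀ p : List Bool, p ≠ [] → p <+: v → ¬ p <:+ v'

/-- A strong cross-fix-free code: cross-fix-free and no codeword is a factor of
another. -/
def StrongCrossFixFree (X : Set (List Bool)) : Prop :=
  CrossFixFree X ∧ ∀ v ∈ X, ∀ v' ∈ X, v ≠ v' → ¬ v <:+: v'

/-- A Dyck word: equal numbers of 1's and 0's, and every prefix has at least as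
many 1's as 0's. -/
def IsDyck (w : List Bool) : Prop :=
  w.count true = w.count false ∧ ∀ p : List Bool, p <+: w → p.count false ≤ p.count true

/-- `𝒟 = { 1α0 : α a Dyck word }`. -/
def Dset : Set (List Bool) := {v | ∃ α : List Bool, IsDyck α ∧ v = true :: (α ++ [false])}

/-- `𝒟(n)`: elements of `𝒟` of length at most `n`. -/
def DLe (n : ℕ) : Set (List Bool) := {v ∈ Dset | v.length ≤ n}


section Stmt4Helpers

open List

lemma mem_of_getLast?' {l : List Bool} {a : Bool} (h : l.getLast? = some a) : a ∈ l := by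
  have h2 : l ≠ [] := by rintro rfl; simp at h
  rw [List.getLast?_eq_getLast h2, Option.some_inj] at h
  exact h ▸ List.getLast_mem h2

/-- Splitting an infix occurrence across an append. -/
lemma infix_append_split {α : Type*} {r x y : List α} (h : r <:+: x ++ y) :
    r <:+: x ∨ r <:+: y ∨
      ∃ r₁ r₂, r₁ ++ r₂ = r ∧ r₁ ≠ [] ∧ r₂ ≠ [] ∧ r₁ <:+ x ∧ r₂ <+: y := by
  obtain ⟨a, b, hab⟩ := h
  rw [List.append_assoc, List.append_eq_append_iff] at hab
  rcases hab with ⟨a', ha', hrb⟩ | ⟨c', hc', hy⟩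
  · rw [List.append_eq_append_iff] at hrb
    rcases hrb with ⟨w, hw, hb⟩ | ⟨w, hw, hyw⟩
    · left
      exact ⟨a, w, by rw [ha', hw]; simp [List.append_assoc]⟩
    · rcases eq_or_ne a' [] with rfl | ha'ne
      · right; left
        simp at hw
        exact ⟨[], b, by rw [hyw, hw]; simp⟩
      · rcases eq_or_ne w [] with rfl | hwne
        · left
          simp at hw
          exact ⟨a, [], by rw [ha', hw]; simp⟩
        · right; right
          exact ⟨a', w, hw.symm, ha'ne, hwne, ⟨a, ha'.symm⟩, ⟨b, hyw.symm⟩⟩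
  · right; left
    exact ⟨c', b, by rw [hy]; simp [List.append_assoc]⟩

lemma clash {s : List Bool} (hs : s ≠ []) (h1 : ∀ a ∈ s, a = true)
    (h2 : ∀ a ∈ s, a = false) : False := by
  cases s with
  | nil => exact hs rfl
  | cons c t =>
    have e1 := h1 c (by simp)
    have e2 := h2 c (by simp)
    simp [e1] at e2

lemma repl_ne_nil {k : ℕ} {a : Bool} (hk : 0 < k) : List.replicate k a ≠ [] := by
  simp only [ne_eq, List.replicate_eq_nil_iff]; omega

lemma not_infix_repl {k n : ℕ} {a b : Bool} (hk : 0 < k) (hab : a ≠ b) :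
    ¬ List.replicate k a <:+: List.replicate n b := fun h =>
  hab (List.eq_of_mem_replicate (h.subset (List.mem_replicate.mpr ⟨by omega, rfl⟩)))

lemma no_true_run {k j l : ℕ} {m : List Bool} (hk : 0 < k) (hj : j < k)
    (hm : m.head? = some false) (hnm : ¬ List.replicate k true <:+: m) :
    ¬ List.replicate k true <:+: (List.replicate j true ++ (m ++ List.replicate l false)) := by
  intro h
  have hmne : m ≠ [] := by intro h'; rw [h'] at hm; simp at hm
  rcases infix_append_split h with h' | h' | ⟨r₁, r₂, hr, hr₁, hr₂, hs, hp⟩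
  · have := h'.length_le; simp at this; omega
  · rcases infix_append_split h' with h'' | h'' | ⟨r₁, r₂, hr, hr₁, hr₂, hs, hp⟩
    · exact hnm h''
    · exact clash (repl_ne_nil hk)
        (fun a ha => List.eq_of_mem_replicate ha)
        (fun a ha => List.eq_of_mem_replicate (h''.subset ha))
    · exact clash hr₂
        (fun a ha => List.eq_of_mem_replicate (hr ▸ (List.mem_append_right r₁ ha)))
        (fun a ha => List.eq_of_mem_replicate (hp.subset ha))
  · cases r₂ with
    | nil => exact hr₂ rfl
    | cons c t =>
      obtain ⟨s, hsEq⟩ := hp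
      have hc : c = false := by
        cases m with
        | nil => exact absurd rfl hmne
        | cons d u =>
          simp only [List.head?_cons, Option.some_inj] at hm
          have := congrArg List.head? hsEq
          simp [hm] at this
          simp [this]
      have hct : c = true := List.eq_of_mem_replicate
        (hr ▸ (List.mem_append_right r₁ (by simp)))
      simp [hc] at hct

lemma no_false_run {k j l : ℕ} {m : List Bool} (hk : 0 < k) (hl : l < k)
    (hm : m.getLast? = some true) (hnm : ¬ List.replicate k false <:+: m) :
    ¬ List.replicate k false <:+: ((List.replicate j true ++ m) ++ List.replicate l false) := by
  intro h
  have hmne : m ≠ [] := by intro h'; rw [h'] at hm; simp at hm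
  rcases infix_append_split h with h' | h' | ⟨r₁, r₂, hr, hr₁, hr₂, hs, hp⟩
  · rcases infix_append_split h' with h'' | h'' | ⟨r₁, r₂, hr, hr₁, hr₂, hs, hp⟩
    · exact clash (repl_ne_nil hk)
        (fun a ha => List.eq_of_mem_replicate (h''.subset ha))
        (fun a ha => List.eq_of_mem_replicate ha)
    · exact hnm h''
    · exact clash hr₁
        (fun a ha => List.eq_of_mem_replicate (hs.subset ha))
        (fun a ha => List.eq_of_mem_replicate (hr ▸ (List.mem_append_left r₂ ha)))
  · have := h'.length_le; simp at this; omega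
  · obtain ⟨s, hsEq⟩ := hs
    have hlast : r₁.getLast? = some true := by
      have := congrArg List.getLast? hsEq
      rwa [List.getLast?_append_of_ne_nil _ hr₁,
        List.getLast?_append_of_ne_nil _ hmne, hm] at this
    have htm : true ∈ r₁ := mem_of_getLast?' hlast
    have : true = false :=
      List.eq_of_mem_replicate (hr ▸ (List.mem_append_left r₂ htm))
    simp at this

/-- The key structural properties shared by all elements of the code. -/
def Good (k : ℕ) (x : List Bool) : Prop :=
  List.replicate k true <+: x ∧ List.replicate k false <:+ x ∧
  ¬ List.replicate k true <:+: x.drop 1 ∧ ¬ List.replicate k false <:+: x.dropLast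

lemma good_of_mem (k : ℕ) (hk : 3 ≤ k) {x : List Bool}
    (hx : x ∈ VkSet k ∪ {List.replicate k true ++ List.replicate k false}) : Good k x := by
  have hk0 : 0 < k := by omega
  obtain ⟨j, hjk⟩ : ∃ j, k = j + 1 := ⟨k - 1, by omega⟩
  rcases hx with hx | hx
  · -- x ∈ VkSet k
    simp only [VkSet, Set.mem_iUnion, Set.mem_setOf_eq] at hx
    obtain ⟨n, hn, hxV⟩ := hx
    obtain ⟨hlen, hpre, hsuf, hhead, hlastm, hnf, hnt⟩ := hxV
    set m := (x.drop k).take (n - 2 * k) with hm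
    have h1 : x.take k = List.replicate k true := by
      have := List.prefix_iff_eq_take.mp hpre
      simpa using this.symm
    have h2 : x.drop (n - k) = List.replicate k false := by
      have := List.suffix_iff_eq_drop.mp hsuf
      simp only [List.length_replicate, hlen] at this
      exact this.symm
    have hdecomp : x = List.replicate k true ++ (m ++ List.replicate k false) := by
      conv_lhs => rw [← List.take_append_drop k x, ← List.take_append_drop (n - 2 * k) (x.drop k)]
      rw [List.drop_drop, h1, ← hm]
      have : k + (n - 2 * k) = n - k := by omega
      rw [this, h2]
    refine ⟨hpre, hsuf, ?_, ?_⟩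
    · rw [hdecomp]
      have : (List.replicate k true ++ (m ++ List.replicate k false)).drop 1 =
          List.replicate j true ++ (m ++ List.replicate k false) := by
        rw [hjk, List.replicate_succ]
        rfl
      rw [this]
      exact no_true_run hk0 (by omega) hhead hnt
    · rw [hdecomp]
      have : (List.replicate k true ++ (m ++ List.replicate k false)).dropLast =
          (List.replicate k true ++ m) ++ List.replicate j false := by
        rw [hjk, List.replicate_succ' (n := j) (a := false), ← List.append_assoc, ← List.append_assoc,
          List.dropLast_concat]
      rw [this]
      exact no_false_run hk0 (by omega) hlastm hnf
  · -- x = 1^k 0^k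
    simp only [Set.mem_singleton_iff] at hx
    subst hx
    refine ⟨⟨_, rfl⟩, ⟨_, rfl⟩, ?_, ?_⟩
    · have : (List.replicate k true ++ List.replicate k false).drop 1 =
          List.replicate j true ++ (List.replicate k false ++ List.replicate 0 false) := by
        rw [hjk, List.replicate_succ]
        simp
      rw [this]
      exact no_true_run hk0 (by omega)
        (by rw [hjk, List.replicate_succ]; rfl)
        (not_infix_repl hk0 (by simp))
    · have : (List.replicate k true ++ List.replicate k false).dropLast =
          (List.replicate 0 true ++ List.replicate k true) ++ List.replicate j false := by
        rw [hjk, List.replicate_succ' (n := j) (a := false), ← List.append_assoc, List.dropLast_concat]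
        simp
      rw [this]
      exact no_false_run hk0 (by omega)
        (by rw [hjk, List.replicate_succ' (n := j) (a := true), List.getLast?_concat])
        (not_infix_repl hk0 (by simp))

lemma not_proper_prefix {k : ℕ} {v v' : List Bool} (hv : Good k v) (hv' : Good k v')
    (hne : v' ≠ v) : ¬ v' <+: v := by
  rintro ⟨b, rfl⟩
  have hb : b ≠ [] := by rintro rfl; simp at hne
  apply hv.2.2.2
  rw [List.dropLast_append_of_ne_nil hb]
  exact (hv'.2.1.isInfix).trans (List.prefix_append _ _).isInfix

lemma main_eq {k : ℕ} (hk : 3 ≤ k) {v v' p : List Bool} (hv : Good k v) (hv' : Good k v')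
    (hp : p ≠ []) (hpv : p <+: v) (hsv' : p <:+ v') : p = v' := by
  rcases le_or_gt p.length k with hle | hgt
  · exfalso
    have h1 : p <+: List.replicate k true :=
      List.prefix_of_prefix_length_le hpv hv.1 (by simpa using hle)
    have h2 : p <:+ List.replicate k false :=
      List.suffix_of_suffix_length_le hsv' hv'.2.1 (by simpa using hle)
    exact clash hp (fun a ha => List.eq_of_mem_replicate (h1.subset ha))
      (fun a ha => List.eq_of_mem_replicate (h2.subset ha))
  · have h1 : List.replicate k true <+: p :=
      List.prefix_of_prefix_length_le hv.1 hpv (by simp; omega)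
    obtain ⟨a, ha⟩ := hsv'
    cases a with
    | nil => simpa using ha
    | cons c t =>
      exfalso
      apply hv'.2.2.1
      rw [← ha]
      have : ((c :: t) ++ p).drop 1 = t ++ p := rfl
      rw [this]
      exact h1.isInfix.trans (List.suffix_append t p).isInfix

end Stmt4Helpers

/-- For any `k ≥ 3`, the set `𝒱^(k) ∪ {1^k 0^k}` is a
cross-fix-free code in which, moreover, no codeword is a factor of another. -/
theorem stmt_4 (k : ℕ) (hk : 3 ≤ k) :
    StrongCrossFixFree (VkSet k ∪ {List.replicate k true ++ List.replicate k false}) := by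
  have hk0 : 0 < k := by omega
  refine ⟨⟨?_, ?_⟩, ?_⟩
  · intro v hvX p hpne hpnv hpref hsuf
    exact hpnv (main_eq hk (good_of_mem k hk hvX) (good_of_mem k hk hvX) hpne hpref hsuf)
  · intro v hvX v' hv'X hne p hpne hpref hsuf
    have hpe := main_eq hk (good_of_mem k hk hvX) (good_of_mem k hk hv'X) hpne hpref hsuf
    exact not_proper_prefix (good_of_mem k hk hvX) (good_of_mem k hk hv'X) (Ne.symm hne)
      (hpe ▸ hpref)
  · intro v hvX v' hv'X hne hinf
    obtain ⟨a, b, hab⟩ := hinf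
    cases a with
    | nil =>
      simp only [List.nil_append] at hab
      exact not_proper_prefix (good_of_mem k hk hv'X) (good_of_mem k hk hvX) hne ⟨b, hab⟩
    | cons c t =>
      apply (good_of_mem k hk hv'X).2.2.1
      rw [← hab]
      have : ((c :: t) ++ v ++ b).drop 1 = t ++ v ++ b := rfl
      rw [this]
      have h1 : List.replicate k true <+: v := (good_of_mem k hk hvX).1
      exact h1.isInfix.trans ⟨t, b, rfl⟩
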